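/- arXiv:2501.01199 — 3 statements merged into one kernel-verified Lean document; each statement's English description precedes it below -/
import Mathlib

section
/- Let n ∈ ℕ, ν > −1, and let x ∈ ℝ be such that x is not an integer multiple of 2π. Then as n → ∞, Ψ_ν^C(x,n) = −(sin((n+1/2)x)/(2 sin(x/2))) · n^{−ν−1} + O(n^{−ν−2}); i.e., the quantity Ψ_ν^C(x,n) + (sin((n+1/2)x)/(2 sin(x/2))) n^{−ν−1} is O(n^{−ν−2}) as n → ∞. -/
open Real Filter Asymptotics

private lemma abel_id (u c : ℕ → ℝ) (n N : ℕ) (hN : n ≤ N) :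
    ∑ k ∈ Finset.Ioc n N, (u k - u (k+1)) * c k
      = u (n+1) * c (n+1) - u (N+1) * c (N+1)
        + ∑ k ∈ Finset.Ioc n N, u (k+1) * (c (k+1) - c k) := by
  induction N, hN using Nat.le_induction with
  | base => simp
  | succ N hN ih =>
      rw [Finset.sum_Ioc_succ_top (by omega), Finset.sum_Ioc_succ_top (by omega), ih]
      ring

private lemma abel_bound (u c : ℕ → ℝ) (M : ℝ) (n N : ℕ) (hn : n ≤ N)
    (hu : ∀ k, n + 1 ≤ k → |u k| ≤ M)
    (hc0 : ∀ k, n + 1 ≤ k → 0 ≤ c k)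
    (hca : ∀ k, n + 1 ≤ k → c (k+1) ≤ c k) :
    |∑ k ∈ Finset.Ioc n N, (u k - u (k+1)) * c k| ≤ 2 * M * c (n+1) := by
  rw [abel_id u c n N hn]
  have hM : 0 ≤ M := le_trans (abs_nonneg _) (hu (n+1) le_rfl)
  have htel : ∑ k ∈ Finset.Ioc n N, (c k - c (k+1)) = c (n+1) - c (N+1) := by
    simpa using abel_id c (fun _ => 1) n N hn
  have hS : |∑ k ∈ Finset.Ioc n N, u (k+1) * (c (k+1) - c k)|
      ≤ M * (c (n+1) - c (N+1)) := by
    calc |∑ k ∈ Finset.Ioc n N, u (k+1) * (c (k+1) - c k)|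
        ≤ ∑ k ∈ Finset.Ioc n N, |u (k+1) * (c (k+1) - c k)| :=
          Finset.abs_sum_le_sum_abs _ _
      _ ≤ ∑ k ∈ Finset.Ioc n N, M * (c k - c (k+1)) := by
          apply Finset.sum_le_sum
          intro k hk
          rw [Finset.mem_Ioc] at hk
          have hk1 : n + 1 ≤ k := hk.1
          have h1 : c (k+1) ≤ c k := hca k hk1
          rw [abs_mul, abs_of_nonpos (show c (k+1) - c k ≤ 0 by linarith), neg_sub]
          exact mul_le_mul_of_nonneg_right (hu (k+1) (by omega)) (by linarith)
      _ = M * (c (n+1) - c (N+1)) := by rw [← Finset.mul_sum, htel]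
  have hA : |u (n+1) * c (n+1)| ≤ M * c (n+1) := by
    rw [abs_mul, abs_of_nonneg (hc0 (n+1) le_rfl)]
    exact mul_le_mul_of_nonneg_right (hu (n+1) le_rfl) (hc0 (n+1) le_rfl)
  have hB : |u (N+1) * c (N+1)| ≤ M * c (N+1) := by
    rw [abs_mul, abs_of_nonneg (hc0 (N+1) (by omega))]
    exact mul_le_mul_of_nonneg_right (hu (N+1) (by omega)) (hc0 (N+1) (by omega))
  calc |u (n+1) * c (n+1) - u (N+1) * c (N+1)
        + ∑ k ∈ Finset.Ioc n N, u (k+1) * (c (k+1) - c k)|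
      ≤ |u (n+1) * c (n+1) - u (N+1) * c (N+1)|
        + |∑ k ∈ Finset.Ioc n N, u (k+1) * (c (k+1) - c k)| := abs_add_le _ _
    _ ≤ (|u (n+1) * c (n+1)| + |u (N+1) * c (N+1)|)
        + |∑ k ∈ Finset.Ioc n N, u (k+1) * (c (k+1) - c k)| := by
        gcongr; exact abs_sub _ _
    _ ≤ (M * c (n+1) + M * c (N+1)) + M * (c (n+1) - c (N+1)) := by
        gcongr
    _ = 2 * M * c (n+1) := by ring

private lemma rpow_diff_bounds {p a : ℝ} (hp : 0 < p) (ha : 0 < a) :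
    p * (a+1) ^ (-p-1) ≤ a ^ (-p) - (a+1) ^ (-p) ∧
      a ^ (-p) - (a+1) ^ (-p) ≤ p * a ^ (-p-1) := by
  obtain ⟨c, hc, heq⟩ := exists_hasDerivAt_eq_slope (fun t : ℝ => t ^ (-p))
      (fun t : ℝ => (-p) * t ^ (-p-1)) (by linarith : a < a + 1)
      (fun t ht => (Real.continuousAt_rpow_const t (-p)
        (Or.inl (ne_of_gt (lt_of_lt_of_le ha ht.1)))).continuousWithinAt)
      (fun t ht => Real.hasDerivAt_rpow_const
        (Or.inl (ne_of_gt (lt_trans ha ht.1))))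
  have hca : 0 < c := lt_trans ha hc.1
  rw [show a + 1 - a = (1:ℝ) by ring, div_one] at heq
  have heq' : a ^ (-p) - (a+1) ^ (-p) = p * c ^ (-p-1) := by linarith
  constructor
  · rw [heq']
    exact mul_le_mul_of_nonneg_left
      (Real.rpow_le_rpow_of_nonpos hca hc.2.le (by linarith)) hp.le
  · rw [heq']
    exact mul_le_mul_of_nonneg_left
      (Real.rpow_le_rpow_of_nonpos ha hc.1.le (by linarith)) hp.le

/-- If `Ψ n` is the limit of the partial sums `∑_{k=n+1}^N cos(kx)/k^{ν+1}`
(i.e. `Ψ n = Ψ_ν^C(x,n)`), with `ν > -1` and `x` not an integer multiple of `2π`, then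
`Ψ n + (sin((n+1/2)x)/(2 sin(x/2))) n^{-ν-1} = O(n^{-ν-2})` as `n → ∞`. -/
theorem stmt_0 (ν x : ℝ) (hν : ν > -1) (hx : ∀ j : ℤ, x ≠ 2 * Real.pi * j)
    (Ψ : ℕ → ℝ)
    (hΨ : ∀ n : ℕ, Filter.Tendsto
      (fun N : ℕ => ∑ k ∈ Finset.Icc (n + 1) N, Real.cos (k * x) / (k : ℝ) ^ (ν + 1))
      Filter.atTop (nhds (Ψ n))) :
    (fun n : ℕ => Ψ n + Real.sin ((n + 1 / 2) * x) / (2 * Real.sin (x / 2)) * (n : ℝ) ^ (-ν - 1))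
      =O[Filter.atTop] (fun n : ℕ => (n : ℝ) ^ (-ν - 2)) := by
  have hp : (0:ℝ) < ν + 1 := by linarith
  set s : ℝ := Real.sin (x / 2) with hs_def
  have hs : s ≠ 0 := by
    intro h
    obtain ⟨j, hj⟩ := Real.sin_eq_zero_iff.mp h
    exact hx j (by linarith [hj, (by ring : 2 * π * (j:ℝ) = 2 * ((j:ℝ) * π))])
  have hs2 : (0:ℝ) < s ^ 2 := by positivity
  have hsabs : (0:ℝ) < |s| := abs_pos.mpr hs
  -- the bounded sequences
  set f : ℕ → ℝ := fun k => (k:ℝ) ^ (-(ν+1)) with hf_def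
  set b : ℕ → ℝ := fun k => -Real.sin (((k:ℝ) - 1/2) * x) / (2 * s) with hb_def
  set w : ℕ → ℝ := fun k => -Real.cos (((k:ℝ) - 1) * x) / (4 * s ^ 2) with hw_def
  set M : ℝ := 1 / (2 * |s|) with hM_def
  set M' : ℝ := 1 / (4 * s ^ 2) with hM'_def
  have hMpos : 0 < M := by positivity
  have hM'pos : 0 < M' := by positivity
  have hbM : ∀ k : ℕ, |b k| ≤ M := by
    intro k
    have h : |b k| = |Real.sin (((k:ℝ) - 1/2) * x)| / (2 * |s|) := by
      rw [hb_def]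
      simp only
      rw [abs_div, abs_neg, abs_mul, abs_two]
    rw [h, hM_def]
    gcongr
    exact Real.abs_sin_le_one _
  have hwM : ∀ k : ℕ, |w k| ≤ M' := by
    intro k
    have h : |w k| = |Real.cos (((k:ℝ) - 1) * x)| / (4 * s ^ 2) := by
      rw [hw_def]
      simp only
      rw [abs_div, abs_neg, abs_of_pos (show (0:ℝ) < 4 * s ^ 2 by positivity)]
    rw [h, hM'_def]
    gcongr
    exact Real.abs_cos_le_one _
  have hb_cos : ∀ k : ℕ, b k - b (k+1) = Real.cos (k * x) := by
    intro k
    have h := Real.sin_sub_sin ((((k:ℝ)+1) - 1/2) * x) (((k:ℝ) - 1/2) * x)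
    rw [show ((((k:ℝ)+1) - 1/2) * x - ((k:ℝ) - 1/2) * x) / 2 = x / 2 by ring,
        show ((((k:ℝ)+1) - 1/2) * x + ((k:ℝ) - 1/2) * x) / 2 = (k:ℝ) * x by ring,
        ← hs_def] at h
    simp only [hb_def]
    push_cast
    rw [div_sub_div_same, div_eq_iff (mul_ne_zero two_ne_zero hs)]
    linear_combination h
  have hw_b : ∀ k : ℕ, w k - w (k+1) = b k := by
    intro k
    have h := Real.cos_sub_cos (((k:ℝ) - 1) * x) ((k:ℝ) * x)
    rw [show ((((k:ℝ) - 1) * x + (k:ℝ) * x)) / 2 = ((k:ℝ) - 1/2) * x by ring,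
        show ((((k:ℝ) - 1) * x - (k:ℝ) * x)) / 2 = -(x / 2) by ring,
        Real.sin_neg, ← hs_def] at h
    simp only [hw_def, hb_def]
    push_cast
    rw [show (k:ℝ) + 1 - 1 = (k:ℝ) by ring]
    rw [div_sub_div_same, div_eq_div_iff (by positivity) (mul_ne_zero two_ne_zero hs)]
    linear_combination (-2 * s) * h
  -- properties of f
  have hf0 : ∀ k : ℕ, 0 ≤ f k := fun k => Real.rpow_nonneg (Nat.cast_nonneg k) _
  have hdle : ∀ k : ℕ, 1 ≤ k → f k - f (k+1) ≤ (ν+1) * (k:ℝ) ^ (-(ν+1)-1) := by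
    intro k hk
    have hk0 : (0:ℝ) < (k:ℝ) := by exact_mod_cast hk
    have := (rpow_diff_bounds hp hk0).2
    rw [hf_def]
    push_cast
    exact this
  have hdge : ∀ k : ℕ, 1 ≤ k → (ν+1) * ((k:ℝ)+1) ^ (-(ν+1)-1) ≤ f k - f (k+1) := by
    intro k hk
    have hk0 : (0:ℝ) < (k:ℝ) := by exact_mod_cast hk
    have := (rpow_diff_bounds hp hk0).1
    rw [hf_def]
    push_cast
    exact this
  have hd0 : ∀ k : ℕ, 1 ≤ k → 0 ≤ f k - f (k+1) := by
    intro k hk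
    refine le_trans ?_ (hdge k hk)
    positivity
  have hdanti : ∀ k : ℕ, 1 ≤ k → f (k+1) - f (k+2) ≤ f k - f (k+1) := by
    intro k hk
    have h1 := hdle (k+1) (by omega)
    have h2 := hdge k hk
    push_cast at h1
    linarith
  -- the key estimate
  have key : ∀ n : ℕ, 1 ≤ n →
      |Ψ n - b (n+1) * f n| ≤ (2 * M' + M) * ((ν+1) * (n:ℝ) ^ (-(ν+1)-1)) := by
    intro n hn
    -- rewrite the partial sums
    have hsum : ∀ N : ℕ, n ≤ N →
        ∑ k ∈ Finset.Icc (n + 1) N, Real.cos (k * x) / (k : ℝ) ^ (ν + 1)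
          = b (n+1) * f (n+1) - b (N+1) * f (N+1)
            + ∑ k ∈ Finset.Ioc n N, b (k+1) * (f (k+1) - f k) := by
      intro N hN
      rw [← abel_id b f n N hN, ← Finset.Icc_add_one_left_eq_Ioc]
      apply Finset.sum_congr rfl
      intro k hk
      rw [Finset.mem_Icc] at hk
      have hk0 : (0:ℝ) ≤ (k:ℝ) := Nat.cast_nonneg k
      rw [hb_cos k, hf_def, div_eq_mul_inv, ← Real.rpow_neg hk0]
    -- bound the remainder sum
    have hR : ∀ N : ℕ, n ≤ N →
        |∑ k ∈ Finset.Ioc n N, b (k+1) * (f (k+1) - f k)|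
          ≤ 2 * M' * (f (n+1) - f (n+2)) := by
      intro N hN
      have hterm : ∀ k : ℕ,
          ((fun k => w (k+1)) k - (fun k => w (k+1)) (k+1)) * (f k - f (k+1))
            = -(b (k+1) * (f (k+1) - f k)) := by
        intro k
        simp only
        rw [hw_b (k+1)]
        ring
      have := abel_bound (fun k => w (k+1)) (fun k => f k - f (k+1)) M' n N hN
        (fun k _ => hwM (k+1))
        (fun k hk => hd0 k (by omega))
        (fun k hk => hdanti k (by omega))
      rw [Finset.sum_congr rfl (fun k _ => hterm k), Finset.sum_neg_distrib, abs_neg] at this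
      exact this
    -- pass to the limit
    have h0 : Filter.Tendsto (fun N : ℕ => b (N+1) * f (N+1)) Filter.atTop (nhds 0) := by
      refine squeeze_zero_norm (a := fun N : ℕ => M * f (N+1)) (fun N => ?_) ?_
      · rw [Real.norm_eq_abs, abs_mul, abs_of_nonneg (hf0 (N+1))]
        exact mul_le_mul_of_nonneg_right (hbM (N+1)) (hf0 (N+1))
      · have h1 : Filter.Tendsto (fun N : ℕ => f (N+1)) Filter.atTop (nhds 0) := by
          have := (tendsto_rpow_neg_atTop hp).comp
            (tendsto_natCast_atTop_atTop.comp (Filter.tendsto_add_atTop_nat 1))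
          exact this
        simpa using h1.const_mul M
    have htend : Filter.Tendsto
        (fun N : ℕ => (∑ k ∈ Finset.Icc (n + 1) N, Real.cos (k * x) / (k : ℝ) ^ (ν + 1))
          - b (n+1) * f (n+1) + b (N+1) * f (N+1))
        Filter.atTop (nhds (Ψ n - b (n+1) * f (n+1))) := by
      have := (((hΨ n).sub_const (b (n+1) * f (n+1))).add h0)
      simpa using this
    have hfinal : |Ψ n - b (n+1) * f (n+1)| ≤ 2 * M' * (f (n+1) - f (n+2)) := by
      apply le_of_tendsto htend.abs
      filter_upwards [Filter.eventually_ge_atTop n] with N hN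
      have heq : (∑ k ∈ Finset.Icc (n + 1) N, Real.cos (k * x) / (k : ℝ) ^ (ν + 1))
          - b (n+1) * f (n+1) + b (N+1) * f (N+1)
          = ∑ k ∈ Finset.Ioc n N, b (k+1) * (f (k+1) - f k) := by
        rw [hsum N hN]; ring
      rw [heq]
      exact hR N hN
    -- assemble
    have h1 : |Ψ n - b (n+1) * f n|
        ≤ |Ψ n - b (n+1) * f (n+1)| + |b (n+1)| * (f n - f (n+1)) := by
      have : Ψ n - b (n+1) * f n
          = (Ψ n - b (n+1) * f (n+1)) - b (n+1) * (f n - f (n+1)) := by ring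
      rw [this]
      refine (abs_sub _ _).trans ?_
      rw [abs_mul, abs_of_nonneg (hd0 n hn)]
    have h2 : |b (n+1)| * (f n - f (n+1)) ≤ M * (f n - f (n+1)) :=
      mul_le_mul_of_nonneg_right (hbM (n+1)) (hd0 n hn)
    have h3 : f (n+1) - f (n+2) ≤ f n - f (n+1) := hdanti n hn
    have h4 : f n - f (n+1) ≤ (ν+1) * (n:ℝ) ^ (-(ν+1)-1) := hdle n hn
    nlinarith [hfinal, h1, h2, h3, h4, hM'pos.le, hMpos.le, hd0 n hn]
  -- conclude Big-O
  rw [Asymptotics.isBigO_iff]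
  refine ⟨(2 * M' + M) * (ν+1), ?_⟩
  filter_upwards [Filter.eventually_ge_atTop 1] with n hn
  have hn0 : (0:ℝ) < (n:ℝ) := by exact_mod_cast hn
  have hkey := key n hn
  have hb_eq : Real.sin ((n + 1 / 2) * x) / (2 * s) * (n : ℝ) ^ (-ν - 1)
      = -(b (n+1) * f n) := by
    rw [hb_def, hf_def, show -ν - 1 = -(ν+1) by ring]
    push_cast
    ring_nf
  rw [Real.norm_eq_abs, Real.norm_eq_abs, hb_eq,
    abs_of_nonneg (Real.rpow_nonneg hn0.le _),
    show -ν - 2 = -(ν+1) - 1 by ring]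
  calc |Ψ n + -(b (n+1) * f n)| = |Ψ n - b (n+1) * f n| := by ring_nf
    _ ≤ (2 * M' + M) * ((ν+1) * (n:ℝ) ^ (-(ν+1)-1)) := hkey
    _ = (2 * M' + M) * (ν+1) * (n:ℝ) ^ (-(ν+1)-1) := by ring
end

section
/- Let n ∈ ℕ, ν > −1, and let x ∈ ℝ be such that x is not an integer multiple of 2π. Then as n → ∞, Ψ_ν^S(x,n) = (cos((n+1/2)x)/(2 sin(x/2))) · n^{−ν−1} + O(n^{−ν−2}); i.e., the quantity Ψ_ν^S(x,n) − (cos((n+1/2)x)/(2 sin(x/2))) n^{−ν−1} is O(n^{−ν−2}) as n → ∞. -/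
open Real Filter Asymptotics

private lemma tele_sum (f : ℕ → ℝ) (n : ℕ) : ∀ N, n ≤ N →
    ∑ k ∈ Finset.Icc (n+1) N, (f k - f (k+1)) = f (n+1) - f (N+1) := by
  intro N hN
  induction N with
  | zero =>
    interval_cases n
    simp
  | succ M ih =>
    rcases Nat.lt_or_ge n (M+1) with h | h
    · have hn : n ≤ M := by omega
      rw [Finset.sum_Icc_succ_top (by omega), ih hn]
      ring
    · have : n = M + 1 := by omega
      subst this
      rw [Finset.Icc_eq_empty (by omega)]
      simp

private lemma sum_ite_Icc (h : ℕ → ℝ) (n M : ℕ) :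
    ∑ i ∈ Finset.range (M+1), (if n+1 ≤ i then h i else 0)
      = ∑ i ∈ Finset.Icc (n+1) M, h i := by
  rw [← Finset.sum_filter]
  apply Finset.sum_congr _ (fun _ _ => rfl)
  ext i
  simp [Nat.lt_succ_iff]
  omega

private lemma mvt_rpow {p : ℝ} (_hp : 0 < p) {a : ℝ} (ha : 1 ≤ a) :
    ∃ c, a < c ∧ c < a + 1 ∧ a ^ (-p) - (a+1) ^ (-p) = p * c ^ (-p-1) := by
  have ha0 : (0:ℝ) < a := by linarith
  obtain ⟨c, hc, hderiv⟩ := exists_hasDerivAt_eq_slope (fun t => t ^ (-p))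
    (fun t => -p * t ^ (-p-1)) (by linarith : a < a + 1)
    (by
      apply ContinuousOn.rpow_const continuousOn_id
      intro t ht
      exact Or.inl (lt_of_lt_of_le ha0 ht.1).ne')
    (by
      intro t ht
      exact Real.hasDerivAt_rpow_const (Or.inl (lt_trans ha0 ht.1).ne'))
  refine ⟨c, hc.1, hc.2, ?_⟩
  have h2 : -p * c ^ (-p-1) = ((a+1) ^ (-p) - a ^ (-p)) / (a + 1 - a) := hderiv
  rw [show a + 1 - a = 1 by ring, div_one] at h2
  linarith

noncomputable def bb (ν : ℝ) (k : ℕ) : ℝ := (k:ℝ) ^ (-ν-1)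
noncomputable def FF (x : ℝ) (k : ℕ) : ℝ := Real.cos (((k:ℝ) + 1/2) * x)
noncomputable def dd (ν : ℝ) (k : ℕ) : ℝ := bb ν k - bb ν (k+1)
noncomputable def GG (x : ℝ) (n k : ℕ) : ℝ :=
  (Real.sin (((k:ℝ)+1)*x) - Real.sin (((n:ℝ)+1)*x)) / (2 * Real.sin (x/2))

private lemma bb_nonneg (ν : ℝ) (k : ℕ) : 0 ≤ bb ν k :=
  Real.rpow_nonneg (Nat.cast_nonneg k) _

private lemma dd_repr {ν : ℝ} (hν : -1 < ν) {k : ℕ} (hk : 1 ≤ k) :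
    ∃ c : ℝ, (k:ℝ) < c ∧ c < (k:ℝ) + 1 ∧ dd ν k = (ν+1) * c ^ (-ν-2) := by
  have hp : (0:ℝ) < ν + 1 := by linarith
  obtain ⟨c, h1, h2, h3⟩ := mvt_rpow hp (show (1:ℝ) ≤ (k:ℝ) by exact_mod_cast hk)
  refine ⟨c, h1, h2, ?_⟩
  rw [dd, bb, bb]
  rw [show -(ν+1) = -ν-1 by ring] at h3
  rw [show (-ν-1) - 1 = -ν-2 by ring] at h3
  push_cast
  convert h3 using 3

private lemma dd_nonneg {ν : ℝ} (hν : -1 < ν) {k : ℕ} (hk : 1 ≤ k) : 0 ≤ dd ν k := by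
  obtain ⟨c, h1, _, h3⟩ := dd_repr hν hk
  have hc : (0:ℝ) < c := lt_of_le_of_lt (by positivity : (0:ℝ) ≤ (k:ℝ)) h1
  rw [h3]
  have := Real.rpow_pos_of_pos hc (-ν-2)
  nlinarith

private lemma dd_le {ν : ℝ} (hν : -1 < ν) {k : ℕ} (hk : 1 ≤ k) :
    dd ν k ≤ (ν+1) * (k:ℝ) ^ (-ν-2) := by
  obtain ⟨c, h1, _, h3⟩ := dd_repr hν hk
  have hk0 : (0:ℝ) < (k:ℝ) := by exact_mod_cast hk
  rw [h3]
  apply mul_le_mul_of_nonneg_left _ (by linarith)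
  exact Real.rpow_le_rpow_of_nonpos hk0 h1.le (by linarith)

private lemma dd_anti {ν : ℝ} (hν : -1 < ν) {k : ℕ} (hk : 1 ≤ k) :
    dd ν (k+1) ≤ dd ν k := by
  obtain ⟨c, h1, h2, h3⟩ := dd_repr hν hk
  obtain ⟨c', h1', h2', h3'⟩ := dd_repr hν (show 1 ≤ k+1 by omega)
  have hc : (0:ℝ) < c := lt_of_le_of_lt (by positivity : (0:ℝ) ≤ (k:ℝ)) h1
  have hcc : c ≤ c' := by
    push_cast at h1' h2'
    linarith
  rw [h3, h3']
  apply mul_le_mul_of_nonneg_left _ (by linarith)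
  exact Real.rpow_le_rpow_of_nonpos hc hcc (by linarith)

private lemma FF_diff (x : ℝ) (k : ℕ) :
    FF x k - FF x (k+1) = 2 * Real.sin (x/2) * Real.sin (((k:ℝ)+1) * x) := by
  rw [FF, FF]
  push_cast
  rw [Real.cos_sub_cos]
  rw [show ((((k:ℝ) + 1/2)*x + (((k:ℝ)+1) + 1/2)*x))/2 = ((k:ℝ)+1)*x by ring,
      show ((((k:ℝ) + 1/2)*x - (((k:ℝ)+1) + 1/2)*x))/2 = -(x/2) by ring]
  rw [Real.sin_neg]
  ring

private lemma GG_diff {x : ℝ} (hs : Real.sin (x/2) ≠ 0) (n k : ℕ) :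
    GG x n (k+1) - GG x n k = FF x (k+1) := by
  rw [GG, GG, FF, div_sub_div_same, div_eq_iff (by simpa using hs)]
  push_cast
  have h := Real.sin_sub_sin (((k:ℝ)+2)*x) (((k:ℝ)+1)*x)
  rw [show ((((k:ℝ)+2)*x - ((k:ℝ)+1)*x))/2 = x/2 by ring,
      show ((((k:ℝ)+2)*x + ((k:ℝ)+1)*x))/2 = ((k:ℝ)+1+1/2)*x by ring] at h
  rw [show ((k:ℝ)+1+1)*x = ((k:ℝ)+2)*x by ring]
  linarith

private lemma GG_self (x : ℝ) (n : ℕ) : GG x n n = 0 := by simp [GG]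

private lemma GG_abs_le {x : ℝ} (hs : Real.sin (x/2) ≠ 0) (n k : ℕ) :
    |GG x n k| ≤ 1 / |Real.sin (x/2)| := by
  rw [GG, abs_div]
  rw [div_le_div_iff₀ (by positivity) (by positivity)]
  have h1 : |Real.sin (((k:ℝ)+1)*x) - Real.sin (((n:ℝ)+1)*x)| ≤ 2 := by
    have := Real.neg_one_le_sin (((k:ℝ)+1)*x)
    have := Real.sin_le_one (((k:ℝ)+1)*x)
    have := Real.neg_one_le_sin (((n:ℝ)+1)*x)
    have := Real.sin_le_one (((n:ℝ)+1)*x)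
    rw [abs_le]; constructor <;> linarith
  have h2 : |2 * Real.sin (x/2)| = 2 * |Real.sin (x/2)| := by
    rw [abs_mul]; norm_num
  rw [h2]
  nlinarith [abs_nonneg (Real.sin (x/2))]

private lemma identB {x : ℝ} (hs : Real.sin (x/2) ≠ 0) (ν : ℝ) (n : ℕ) :
    ∀ N, n ≤ N → ∑ k ∈ Finset.Icc (n+1) N, FF x k * dd ν k
      = GG x n N * dd ν (N+1) + ∑ k ∈ Finset.Icc (n+1) N, GG x n k * (dd ν k - dd ν (k+1)) := by
  intro N hN
  induction N with
  | zero =>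
    interval_cases n
    simp [GG_self]
  | succ M ih =>
    rcases Nat.lt_or_ge n (M+1) with h | h
    · rw [Finset.sum_Icc_succ_top (by omega), Finset.sum_Icc_succ_top (by omega), ih (by omega)]
      linear_combination (-(dd ν (M+1))) * (GG_diff hs n M)
    · have hnm : n = M + 1 := by omega
      subst hnm
      rw [Finset.Icc_eq_empty (by omega)]
      simp [GG_self]

private lemma identA (x ν : ℝ) (n : ℕ) :
    ∀ N, n ≤ N → 2 * Real.sin (x/2) * ∑ k ∈ Finset.Icc (n+1) N, Real.sin ((k:ℝ)*x) * bb ν k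
      = FF x n * bb ν (n+1) - FF x N * bb ν (N+1)
        - ∑ k ∈ Finset.Icc (n+1) N, FF x k * dd ν k := by
  intro N hN
  induction N with
  | zero =>
    interval_cases n
    simp
  | succ M ih =>
    rcases Nat.lt_or_ge n (M+1) with h | h
    · rw [Finset.sum_Icc_succ_top (by omega), Finset.sum_Icc_succ_top (by omega)]
      have hdd : dd ν (M+1) = bb ν (M+1) - bb ν (M+1+1) := rfl
      have hF := FF_diff x M
      push_cast
      linear_combination ih (by omega) - (bb ν (M+1)) * hF + (FF x (M+1)) * hdd
    · have hnm : n = M + 1 := by omega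
      subst hnm
      rw [Finset.Icc_eq_empty (by omega)]
      simp

private lemma key {ν x : ℝ} (hν : -1 < ν) (hs : Real.sin (x/2) ≠ 0) (n : ℕ) {y : ℝ}
    (hy : Filter.Tendsto
      (fun N : ℕ => ∑ k ∈ Finset.Icc (n + 1) N, Real.sin (k * x) / (k : ℝ) ^ (ν + 1))
      Filter.atTop (nhds y)) :
    ∃ T : ℝ, |T| ≤ dd ν (n+1) / |Real.sin (x/2)| ∧
      y = (FF x n * bb ν (n+1) - T) / (2 * Real.sin (x/2)) := by
  have h2s : (2 : ℝ) * Real.sin (x/2) ≠ 0 := by simpa using hs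
  -- summability of the dominating series
  have hgsum : Summable (fun k => if n+1 ≤ k then dd ν k else 0) := by
    apply summable_of_sum_range_le (c := bb ν (n+1))
    · intro k; split
      · exact dd_nonneg hν (by omega)
      · exact le_refl 0
    · intro N
      calc ∑ i ∈ Finset.range N, (if n+1 ≤ i then dd ν i else 0)
          ≤ ∑ i ∈ Finset.range (N+n+1), (if n+1 ≤ i then dd ν i else 0) := by
            apply Finset.sum_le_sum_of_subset_of_nonneg
              (Finset.range_subset_range.2 (by omega))
            intro i _ _
            split
            · exact dd_nonneg hν (by omega)
            · exact le_refl 0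
        _ = ∑ i ∈ Finset.Icc (n+1) (N+n), dd ν i := sum_ite_Icc _ _ _
        _ = bb ν (n+1) - bb ν (N+n+1) := by
            simp only [dd]
            exact tele_sum (bb ν) n (N+n) (by omega)
        _ ≤ bb ν (n+1) := by
            have := bb_nonneg ν (N+n+1); linarith
  have hfsum : Summable (fun k => if n+1 ≤ k then FF x k * dd ν k else 0) := by
    apply Summable.of_norm_bounded hgsum
    intro k; split
    · rename_i hk
      rw [Real.norm_eq_abs, abs_mul]
      have h1 : |FF x k| ≤ 1 := abs_cos_le_one _
      have h2 : 0 ≤ dd ν k := dd_nonneg hν (by omega)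
      rw [abs_of_nonneg h2]
      nlinarith [abs_nonneg (FF x k)]
    · simp
  obtain ⟨T, hT⟩ := hfsum
  have hTtend : Filter.Tendsto (fun N => ∑ k ∈ Finset.Icc (n+1) N, FF x k * dd ν k)
      Filter.atTop (nhds T) := by
    have h1 := hT.tendsto_sum_nat
    have h3 := h1.comp (tendsto_add_atTop_nat 1)
    exact h3.congr (fun N => sum_ite_Icc _ n N)
  -- bound on |T|
  have hTb : |T| ≤ dd ν (n+1) / |Real.sin (x/2)| := by
    apply le_of_tendsto hTtend.abs
    filter_upwards [eventually_ge_atTop n] with N hN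
    rw [identB hs ν n N hN]
    have hA : (0:ℝ) < |Real.sin (x/2)| := abs_pos.2 hs
    have h1 : |GG x n N * dd ν (N+1)| ≤ (1/|Real.sin (x/2)|) * dd ν (N+1) := by
      rw [abs_mul, abs_of_nonneg (dd_nonneg hν (by omega))]
      exact mul_le_mul_of_nonneg_right (GG_abs_le hs n N) (dd_nonneg hν (by omega))
    have h2 : |∑ k ∈ Finset.Icc (n+1) N, GG x n k * (dd ν k - dd ν (k+1))|
        ≤ ∑ k ∈ Finset.Icc (n+1) N, (1/|Real.sin (x/2)|) * (dd ν k - dd ν (k+1)) := by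
      refine (Finset.abs_sum_le_sum_abs _ _).trans (Finset.sum_le_sum fun k hk => ?_)
      have hk1 : 1 ≤ k := by
        rw [Finset.mem_Icc] at hk; omega
      have hpos : 0 ≤ dd ν k - dd ν (k+1) := sub_nonneg.2 (dd_anti hν hk1)
      rw [abs_mul, abs_of_nonneg hpos]
      exact mul_le_mul_of_nonneg_right (GG_abs_le hs n k) hpos
    have h3 : ∑ k ∈ Finset.Icc (n+1) N, (1/|Real.sin (x/2)|) * (dd ν k - dd ν (k+1))
        = (1/|Real.sin (x/2)|) * (dd ν (n+1) - dd ν (N+1)) := by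
      rw [← Finset.mul_sum, tele_sum (dd ν) n N hN]
    calc |GG x n N * dd ν (N+1) + ∑ k ∈ Finset.Icc (n+1) N, GG x n k * (dd ν k - dd ν (k+1))|
        ≤ |GG x n N * dd ν (N+1)|
          + |∑ k ∈ Finset.Icc (n+1) N, GG x n k * (dd ν k - dd ν (k+1))| := abs_add_le _ _
      _ ≤ (1/|Real.sin (x/2)|) * dd ν (N+1)
          + (1/|Real.sin (x/2)|) * (dd ν (n+1) - dd ν (N+1)) := by
            rw [← h3]; exact add_le_add h1 h2
      _ = dd ν (n+1) / |Real.sin (x/2)| := by ring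
  -- limit of the partial sums
  have hb0 : Filter.Tendsto (fun N : ℕ => bb ν (N+1)) Filter.atTop (nhds 0) := by
    have h1 : Filter.Tendsto (fun t : ℝ => t ^ (-(ν+1))) Filter.atTop (nhds 0) :=
      tendsto_rpow_neg_atTop (by linarith)
    have h2 : Filter.Tendsto (fun N : ℕ => ((N:ℝ)+1)) Filter.atTop Filter.atTop :=
      Filter.tendsto_atTop_add_const_right _ 1 tendsto_natCast_atTop_atTop
    have h3 := h1.comp h2
    refine h3.congr fun N => ?_
    simp only [Function.comp, bb]
    push_cast
    rw [show -(ν+1) = -ν-1 by ring]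
  have hFb0 : Filter.Tendsto (fun N => FF x N * bb ν (N+1)) Filter.atTop (nhds 0) := by
    apply squeeze_zero_norm (fun N => ?_) hb0
    rw [Real.norm_eq_abs, abs_mul, abs_of_nonneg (bb_nonneg ν (N+1))]
    have hF1 : |FF x N| ≤ 1 := by rw [FF]; exact abs_cos_le_one _
    nlinarith [abs_nonneg (FF x N), bb_nonneg ν (N+1)]
  have hmain : Filter.Tendsto
      (fun N : ℕ => ∑ k ∈ Finset.Icc (n + 1) N, Real.sin (k * x) / (k : ℝ) ^ (ν + 1))
      Filter.atTop (nhds ((FF x n * bb ν (n+1) - 0 - T) / (2 * Real.sin (x/2)))) := by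
    have h4 : Filter.Tendsto
        (fun N : ℕ => (FF x n * bb ν (n+1) - FF x N * bb ν (N+1)
            - ∑ k ∈ Finset.Icc (n+1) N, FF x k * dd ν k) / (2 * Real.sin (x/2)))
        Filter.atTop (nhds ((FF x n * bb ν (n+1) - 0 - T) / (2 * Real.sin (x/2)))) :=
      ((tendsto_const_nhds.sub hFb0).sub hTtend).div_const _
    apply h4.congr'
    filter_upwards [eventually_ge_atTop n] with N hN
    rw [← identA x ν n N hN, mul_div_cancel_left₀ _ h2s]
    refine (Finset.sum_congr rfl fun k _ => ?_).symm
    rw [bb, show -ν-1 = -(ν+1) by ring, Real.rpow_neg (Nat.cast_nonneg k), div_eq_mul_inv]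
  have hyval : y = (FF x n * bb ν (n+1) - 0 - T) / (2 * Real.sin (x/2)) :=
    tendsto_nhds_unique hy hmain
  refine ⟨T, hTb, ?_⟩
  rw [hyval]; ring

/-- If `Ψ n` is the limit of the partial sums `∑_{k=n+1}^N sin(kx)/k^{ν+1}`
(i.e. `Ψ n = Ψ_ν^S(x,n)`), with `ν > -1` and `x` not an integer multiple of `2π`, then
`Ψ n - (cos((n+1/2)x)/(2 sin(x/2))) n^{-ν-1} = O(n^{-ν-2})` as `n → ∞`. -/
theorem stmt_1 (ν x : ℝ) (hν : ν > -1) (hx : ∀ j : ℤ, x ≠ 2 * Real.pi * j)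
    (Ψ : ℕ → ℝ)
    (hΨ : ∀ n : ℕ, Filter.Tendsto
      (fun N : ℕ => ∑ k ∈ Finset.Icc (n + 1) N, Real.sin (k * x) / (k : ℝ) ^ (ν + 1))
      Filter.atTop (nhds (Ψ n))) :
    (fun n : ℕ => Ψ n - Real.cos ((n + 1 / 2) * x) / (2 * Real.sin (x / 2)) * (n : ℝ) ^ (-ν - 1))
      =O[Filter.atTop] (fun n : ℕ => (n : ℝ) ^ (-ν - 2)) := by
  have hs : Real.sin (x/2) ≠ 0 := by
    rw [Ne, Real.sin_eq_zero_iff]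
    rintro ⟨j, hj⟩
    exact hx j (by push_cast at hj ⊢; linarith)
  have hA : (0:ℝ) < |Real.sin (x/2)| := abs_pos.2 hs
  rw [Asymptotics.isBigO_iff]
  refine ⟨((ν+1) * (1 + 1/|Real.sin (x/2)|)) / (2*|Real.sin (x/2)|), ?_⟩
  filter_upwards [eventually_ge_atTop 1] with n hn
  obtain ⟨T, hTb, hy⟩ := key hν hs n (hΨ n)
  have hn0 : (0:ℝ) < (n:ℝ) := by exact_mod_cast hn
  rw [Real.norm_eq_abs, Real.norm_eq_abs]
  have heq : Ψ n - Real.cos ((n + 1 / 2) * x) / (2 * Real.sin (x / 2)) * (n : ℝ) ^ (-ν - 1)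
      = (FF x n * (bb ν (n+1) - bb ν n) - T) / (2 * Real.sin (x/2)) := by
    rw [hy]
    simp only [FF, bb]
    field_simp
    ring
  rw [heq]
  have hnum : |FF x n * (bb ν (n+1) - bb ν n) - T| ≤ dd ν n + dd ν (n+1)/|Real.sin (x/2)| := by
    have hddn : bb ν n - bb ν (n+1) = dd ν n := rfl
    have e2 : |FF x n * (bb ν (n+1) - bb ν n)| ≤ dd ν n := by
      rw [abs_mul, abs_sub_comm, hddn, abs_of_nonneg (dd_nonneg hν hn)]
      have hF1 : |FF x n| ≤ 1 := by rw [FF]; exact abs_cos_le_one _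
      nlinarith [abs_nonneg (FF x n), dd_nonneg hν hn]
    have e3 := abs_add_le (FF x n * (bb ν (n+1) - bb ν n)) (-T)
    rw [abs_neg] at e3
    rw [sub_eq_add_neg]
    linarith
  have hdd_n : dd ν n ≤ (ν+1) * (n:ℝ)^(-ν-2) := dd_le hν hn
  have hdd_n1 : dd ν (n+1) ≤ (ν+1) * (n:ℝ)^(-ν-2) := (dd_anti hν hn).trans hdd_n
  have hP : (0:ℝ) ≤ (n:ℝ)^(-ν-2) := Real.rpow_nonneg hn0.le _
  rw [abs_div, show |2 * Real.sin (x/2)| = 2 * |Real.sin (x/2)| by rw [abs_mul]; norm_num,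
    abs_of_nonneg hP]
  have step1 : |FF x n * (bb ν (n+1) - bb ν n) - T|
      ≤ (ν+1) * (n:ℝ)^(-ν-2) + ((ν+1) * (n:ℝ)^(-ν-2))/|Real.sin (x/2)| := by
    refine hnum.trans ?_
    gcongr
  calc |FF x n * (bb ν (n+1) - bb ν n) - T| / (2 * |Real.sin (x/2)|)
      ≤ ((ν+1) * (n:ℝ)^(-ν-2) + ((ν+1) * (n:ℝ)^(-ν-2))/|Real.sin (x/2)|)
          / (2 * |Real.sin (x/2)|) := by gcongr
    _ = ((ν+1) * (1 + 1/|Real.sin (x/2)|)) / (2*|Real.sin (x/2)|) * (n:ℝ)^(-ν-2) := by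
        ring
end

section
/- Let ν > 0 and let x ∈ ℝ be an integer multiple of 2π. Then Ψ_ν^S(x,n) = 0 for every n ∈ ℕ, and as n → ∞, Ψ_ν^C(x,n) = n^{−ν}/ν − n^{−ν−1}/2 + O(n^{−ν−2}); i.e., the quantity Ψ_ν^C(x,n) − n^{−ν}/ν + n^{−ν−1}/2 is O(n^{−ν−2}) as n → ∞. -/
open Real Filter Asymptotics Set

private lemma psi_intble {s a b : ℝ} (ha : 0 < a) (hb : 0 < b) :
    IntervalIntegrable (fun t : ℝ => t ^ (-s)) MeasureTheory.volume a b := by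
  apply ContinuousOn.intervalIntegrable
  intro t ht
  have ht0 : 0 < t := lt_of_lt_of_le (lt_min ha hb) ht.1
  exact (Real.continuousAt_rpow_const t (-s) (Or.inl ht0.ne')).continuousWithinAt

private lemma psi_integral_linear (u v c d : ℝ) :
    ∫ t in u..v, (c + d * t) = c * (v - u) + d * (v ^ 2 - u ^ 2) / 2 := by
  rw [intervalIntegral.integral_add (intervalIntegrable_const)
      ((continuous_mul_left d).intervalIntegrable _ _),
    intervalIntegral.integral_const, intervalIntegral.integral_const_mul, integral_id]
  simp [smul_eq_mul]
  ring

private lemma psi_hasDeriv {s t : ℝ} (ht : t ≠ 0) :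
    HasDerivAt (fun u : ℝ => u ^ (-s)) (-s * t ^ (-s - 1)) t :=
  Real.hasDerivAt_rpow_const (Or.inl ht)

private lemma psi_convex {s : ℝ} (hs : 0 < s) :
    ConvexOn ℝ (Set.Ioi (0:ℝ)) (fun t : ℝ => t ^ (-s)) := by
  apply convexOn_of_hasDerivWithinAt2_nonneg (convex_Ioi 0)
    (f' := fun t : ℝ => -s * t ^ (-s - 1))
    (f'' := fun t : ℝ => -s * ((-s - 1) * t ^ (-s - 2)))
  · intro t ht
    exact (Real.continuousAt_rpow_const t (-s) (Or.inl (ne_of_gt ht))).continuousWithinAt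
  · intro t ht
    rw [interior_Ioi] at ht
    exact (psi_hasDeriv ht.ne').hasDerivWithinAt
  · intro t ht
    rw [interior_Ioi] at ht
    have h := ((psi_hasDeriv (s := s + 1) ht.ne').const_mul (-s)).hasDerivWithinAt
      (s := interior (Set.Ioi (0:ℝ)))
    have e1 : -(s+1) = -s - 1 := by ring
    rw [e1] at h
    have e2 : -s - 1 - 1 = -s - 2 := by ring
    rw [e2] at h
    exact h
  · intro t ht
    rw [interior_Ioi] at ht
    have hA : (0:ℝ) ≤ t ^ (-s - 2) := Real.rpow_nonneg ht.le _
    nlinarith [mul_nonneg (mul_nonneg hs.le (by linarith : (0:ℝ) ≤ s + 1)) hA]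

private lemma psi_key_low {s a : ℝ} (hs : 0 < s) (ha : 0 < a) :
    ∫ t in a..(a+1), t ^ (-s) ≤ (a ^ (-s) + (a+1) ^ (-s)) / 2 := by
  have hmono : ∀ t ∈ Set.Icc a (a+1),
      t ^ (-s) ≤ ((a+1) * a ^ (-s) - a * (a+1) ^ (-s)) + ((a+1) ^ (-s) - a ^ (-s)) * t := by
    intro t ht
    have hb : a + 1 ∈ Set.Ioi (0:ℝ) := by simp; linarith
    have hcomb := (psi_convex hs).2 (Set.mem_Ioi.mpr ha) hb
      (by linarith [ht.2] : (0:ℝ) ≤ a + 1 - t) (by linarith [ht.1] : (0:ℝ) ≤ t - a)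
      (by ring)
    have e : (a+1-t) • a + (t-a) • (a+1) = t := by simp [smul_eq_mul]; ring
    rw [e] at hcomb
    simp only [smul_eq_mul] at hcomb
    calc t ^ (-s) ≤ (a+1-t) * a ^ (-s) + (t-a) * (a+1) ^ (-s) := hcomb
      _ = ((a+1) * a ^ (-s) - a * (a+1) ^ (-s)) + ((a+1) ^ (-s) - a ^ (-s)) * t := by ring
  have hmain := intervalIntegral.integral_mono_on (by linarith : a ≤ a + 1)
    (psi_intble ha (by linarith)) (Continuous.intervalIntegrable (by fun_prop) _ _) hmono
  rw [psi_integral_linear] at hmain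
  calc (∫ t in a..(a+1), t ^ (-s)) ≤ _ := hmain
    _ = (a ^ (-s) + (a+1) ^ (-s)) / 2 := by ring

private lemma psi_key_high {s a : ℝ} (hs : 0 < s) (ha : 0 < a) :
    (a ^ (-s) + (a+1) ^ (-s)) / 2 - (s/8) * (a ^ (-s-1) - (a+1) ^ (-s-1))
      ≤ ∫ t in a..(a+1), t ^ (-s) := by
  have hm : a < a + 1/2 := by linarith
  have hm0 : (0:ℝ) < a + 1/2 := by linarith
  have hb0 : (0:ℝ) < a + 1 := by linarith
  -- first half: tangent at a
  have h1 : ∀ t ∈ Set.Icc a (a + 1/2),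
      (a ^ (-s) - (-s * a ^ (-s-1)) * a) + (-s * a ^ (-s-1)) * t ≤ t ^ (-s) := by
    intro t ht
    rcases eq_or_lt_of_le ht.1 with rfl | hlt
    · simp
    · have hslope := (psi_convex hs).le_slope_of_hasDerivAt (Set.mem_Ioi.mpr ha)
        (Set.mem_Ioi.mpr (lt_trans ha hlt)) hlt (psi_hasDeriv ha.ne')
      rw [slope_def_field, le_div_iff₀ (by linarith : (0:ℝ) < t - a)] at hslope
      nlinarith [hslope]
  have h2 : ∀ t ∈ Set.Icc (a + 1/2) (a+1),
      ((a+1) ^ (-s) - (-s * (a+1) ^ (-s-1)) * (a+1)) + (-s * (a+1) ^ (-s-1)) * t ≤ t ^ (-s) := by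
    intro t ht
    rcases eq_or_lt_of_le ht.2 with heq | hlt
    · rw [heq]; ring_nf
      exact le_rfl
    · have ht0 : 0 < t := by have := ht.1; linarith
      have hslope := (psi_convex hs).slope_le_of_hasDerivAt (Set.mem_Ioi.mpr ht0)
        (Set.mem_Ioi.mpr hb0) hlt (psi_hasDeriv hb0.ne')
      rw [slope_def_field, div_le_iff₀ (by linarith : (0:ℝ) < (a+1) - t)] at hslope
      nlinarith [hslope]
  have hI1 := intervalIntegral.integral_mono_on hm.le
    (Continuous.intervalIntegrable (by fun_prop) _ _)
    (psi_intble ha hm0) h1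
  have hI2 := intervalIntegral.integral_mono_on (by linarith : a + 1/2 ≤ a + 1)
    (Continuous.intervalIntegrable (by fun_prop) _ _)
    (psi_intble hm0 hb0) h2
  rw [psi_integral_linear] at hI1 hI2
  have hsplit : (∫ t in a..(a + 1/2), t ^ (-s)) + ∫ t in (a + 1/2)..(a+1), t ^ (-s)
      = ∫ t in a..(a+1), t ^ (-s) :=
    intervalIntegral.integral_add_adjacent_intervals (psi_intble ha hm0) (psi_intble hm0 hb0)
  have e1 : (a ^ (-s) - (-s * a ^ (-s-1)) * a) * (a + 1/2 - a)
      + (-s * a ^ (-s-1)) * ((a + 1/2) ^ 2 - a ^ 2) / 2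
      = a ^ (-s) / 2 - s * a ^ (-s-1) / 8 := by ring
  have e2 : ((a+1) ^ (-s) - (-s * (a+1) ^ (-s-1)) * (a+1)) * ((a+1) - (a + 1/2))
      + (-s * (a+1) ^ (-s-1)) * ((a+1) ^ 2 - (a + 1/2) ^ 2) / 2
      = (a+1) ^ (-s) / 2 + s * (a+1) ^ (-s-1) / 8 := by ring
  rw [e1] at hI1
  rw [e2] at hI2
  linarith

/-- Let `ν > 0` and let `x` be an integer multiple of `2π`. If `ΨS n` is the limit of
the partial sums `∑_{k=n+1}^N sin(kx)/k^{ν+1}` and `ΨC n` is the limit of the partial sums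
`∑_{k=n+1}^N cos(kx)/k^{ν+1}`, then `ΨS n = 0` for every `n`, and
`ΨC n - n^{-ν}/ν + n^{-ν-1}/2 = O(n^{-ν-2})` as `n → ∞`. -/
theorem stmt_2 (ν x : ℝ) (hν : ν > 0) (hx : ∃ j : ℤ, x = 2 * Real.pi * j)
    (ΨC ΨS : ℕ → ℝ)
    (hΨC : ∀ n : ℕ, Filter.Tendsto
      (fun N : ℕ => ∑ k ∈ Finset.Icc (n + 1) N, Real.cos (k * x) / (k : ℝ) ^ (ν + 1))
      Filter.atTop (nhds (ΨC n)))
    (hΨS : ∀ n : ℕ, Filter.Tendsto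
      (fun N : ℕ => ∑ k ∈ Finset.Icc (n + 1) N, Real.sin (k * x) / (k : ℝ) ^ (ν + 1))
      Filter.atTop (nhds (ΨS n))) :
    (∀ n : ℕ, ΨS n = 0) ∧
    (fun n : ℕ => ΨC n - (n : ℝ) ^ (-ν) / ν + (n : ℝ) ^ (-ν - 1) / 2)
      =O[Filter.atTop] (fun n : ℕ => (n : ℝ) ^ (-ν - 2)) := by
  obtain ⟨j, hj⟩ := hx
  set s : ℝ := ν + 1 with hs_def
  have hs0 : 0 < s := by simp only [hs_def]; linarith
  have hsin : ∀ k : ℕ, Real.sin (k * x) = 0 := by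
    intro k
    have e : (k : ℝ) * x = ((2 * k * j : ℤ) : ℝ) * Real.pi := by push_cast [hj]; ring
    rw [e, Real.sin_int_mul_pi]
  have hcos : ∀ k : ℕ, Real.cos (k * x) = 1 := by
    intro k
    have e : (k : ℝ) * x = ((k * j : ℤ) : ℝ) * (2 * Real.pi) := by push_cast [hj]; ring
    rw [e, Real.cos_int_mul_two_pi]
  constructor
  · intro n
    refine tendsto_nhds_unique (hΨS n) ?_
    have e : (fun N : ℕ => ∑ k ∈ Finset.Icc (n + 1) N, Real.sin (k * x) / (k : ℝ) ^ (ν + 1))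
        = fun _ : ℕ => (0:ℝ) := by
      funext N
      exact Finset.sum_eq_zero fun k _ => by rw [hsin k, zero_div]
    rw [e]
    exact tendsto_const_nhds
  -- cosine part
  have hsum_eq : ∀ n N : ℕ,
      (∑ k ∈ Finset.Icc (n + 1) N, Real.cos (k * x) / (k : ℝ) ^ (ν + 1))
        = ∑ k ∈ Finset.Icc (n + 1) N, ((k : ℝ)) ^ (-s) := by
    intro n N
    refine Finset.sum_congr rfl fun k hk => ?_
    have hk1 : n + 1 ≤ k := (Finset.mem_Icc.mp hk).1
    have hk0 : (0:ℝ) < (k:ℝ) := by exact_mod_cast Nat.lt_of_lt_of_le (Nat.succ_pos n) hk1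
    rw [hcos k, Real.rpow_neg hk0.le, one_div, hs_def]
  -- integral of t^(-s) over [a, a+1]
  have hIval : ∀ a : ℝ, 0 < a →
      (∫ t in a..(a+1), t ^ (-s)) = (a ^ (-ν) - (a+1) ^ (-ν)) / ν := by
    intro a ha
    have hsne : -s ≠ -1 := by rw [hs_def]; intro h; have := neg_injective h; linarith
    rw [integral_rpow (Or.inr ⟨hsne,
      by rw [Set.uIcc_of_le (by linarith : a ≤ a + 1)]; intro h; exact absurd h.1 (by linarith)⟩)]
    have e : -s + 1 = -ν := by rw [hs_def]; ring
    rw [e, div_neg, ← neg_div, neg_sub]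
  -- the two-sided bound on partial sums, by induction
  have key : ∀ n : ℕ, 1 ≤ n → ∀ N : ℕ, n ≤ N →
      ((n:ℝ) ^ (-ν) - (N:ℝ) ^ (-ν)) / ν - ((n:ℝ) ^ (-s) - (N:ℝ) ^ (-s)) / 2
        ≤ (∑ k ∈ Finset.Icc (n + 1) N, ((k : ℝ)) ^ (-s)) ∧
      (∑ k ∈ Finset.Icc (n + 1) N, ((k : ℝ)) ^ (-s))
        ≤ ((n:ℝ) ^ (-ν) - (N:ℝ) ^ (-ν)) / ν - ((n:ℝ) ^ (-s) - (N:ℝ) ^ (-s)) / 2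
          + (s/8) * ((n:ℝ) ^ (-s-1) - (N:ℝ) ^ (-s-1)) := by
    intro n hn N hN
    induction N, hN using Nat.le_induction with
    | base =>
        rw [Finset.Icc_eq_empty (by omega)]
        simp
    | succ N hNn ih =>
        have hcast : ((N + 1 : ℕ) : ℝ) = (N : ℝ) + 1 := by push_cast; ring
        have haN : (0:ℝ) < (N:ℝ) := by
          have : 1 ≤ N := le_trans hn hNn
          exact_mod_cast this
        have hlow := psi_key_low (s := s) hs0 haN
        have hhigh := psi_key_high (s := s) hs0 haN
        have hint := hIval (N:ℝ) haN
        rw [hint] at hlow hhigh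
        rw [Finset.sum_Icc_succ_top (by omega : n + 1 ≤ N + 1)]
        rw [hcast]
        have d1 : ((n:ℝ)^(-ν) - ((N:ℝ)+1)^(-ν))/ν
            = ((n:ℝ)^(-ν) - (N:ℝ)^(-ν))/ν + ((N:ℝ)^(-ν) - ((N:ℝ)+1)^(-ν))/ν := by ring
        constructor
        · have := ih.1; linarith
        · have := ih.2; linarith
  -- limits
  have hzero : ∀ c : ℝ, 0 < c → Tendsto (fun N : ℕ => ((N:ℝ)) ^ (-c)) atTop (nhds 0) :=
    fun c hc => (tendsto_rpow_neg_atTop hc).comp tendsto_natCast_atTop_atTop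
  have hbound : ∀ n : ℕ, 1 ≤ n →
      (n:ℝ) ^ (-ν) / ν - (n:ℝ) ^ (-s) / 2 ≤ ΨC n ∧
      ΨC n ≤ (n:ℝ) ^ (-ν) / ν - (n:ℝ) ^ (-s) / 2 + (s/8) * (n:ℝ) ^ (-s-1) := by
    intro n hn
    have hC : Tendsto (fun N : ℕ => ∑ k ∈ Finset.Icc (n + 1) N, ((k : ℝ)) ^ (-s))
        atTop (nhds (ΨC n)) := by
      have := hΨC n
      rw [show (fun N : ℕ => ∑ k ∈ Finset.Icc (n + 1) N, Real.cos (k * x) / (k : ℝ) ^ (ν + 1))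
          = fun N : ℕ => ∑ k ∈ Finset.Icc (n + 1) N, ((k : ℝ)) ^ (-s) from funext (hsum_eq n)] at this
      exact this
    have hL : Tendsto (fun N : ℕ => ((n:ℝ) ^ (-ν) - (N:ℝ) ^ (-ν)) / ν
        - ((n:ℝ) ^ (-s) - (N:ℝ) ^ (-s)) / 2) atTop
        (nhds ((n:ℝ) ^ (-ν) / ν - (n:ℝ) ^ (-s) / 2)) := by
      have := (((tendsto_const_nhds (x := (n:ℝ)^(-ν))).sub (hzero ν hν)).div_const ν).sub
        (((tendsto_const_nhds (x := (n:ℝ)^(-s))).sub (hzero s hs0)).div_const 2)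
      simpa using this
    have hU : Tendsto (fun N : ℕ => ((n:ℝ) ^ (-ν) - (N:ℝ) ^ (-ν)) / ν
        - ((n:ℝ) ^ (-s) - (N:ℝ) ^ (-s)) / 2 + (s/8) * ((n:ℝ) ^ (-s-1) - (N:ℝ) ^ (-s-1)))
        atTop (nhds ((n:ℝ) ^ (-ν) / ν - (n:ℝ) ^ (-s) / 2 + (s/8) * (n:ℝ) ^ (-s-1))) := by
      have := ((((tendsto_const_nhds (x := (n:ℝ)^(-ν))).sub (hzero ν hν)).div_const ν).sub
        (((tendsto_const_nhds (x := (n:ℝ)^(-s))).sub (hzero s hs0)).div_const 2)).add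
        (((tendsto_const_nhds (x := (n:ℝ)^(-s-1))).sub (hzero (s+1) (by linarith))).const_mul (s/8))
      have e : -(s+1) = -s-1 := by ring
      rw [e] at this
      simpa using this
    constructor
    · refine le_of_tendsto_of_tendsto hL hC ?_
      filter_upwards [eventually_ge_atTop n] with N hN
      exact (key n hn N hN).1
    · refine le_of_tendsto_of_tendsto hC hU ?_
      filter_upwards [eventually_ge_atTop n] with N hN
      exact (key n hn N hN).2
  rw [isBigO_iff]
  refine ⟨s/8, ?_⟩
  filter_upwards [eventually_ge_atTop 1] with n hn
  obtain ⟨hb1, hb2⟩ := hbound n hn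
  have en1 : (n:ℝ) ^ (-s) = (n:ℝ) ^ (-ν - 1) := by rw [hs_def]; ring_nf
  have en2 : (n:ℝ) ^ (-s-1) = (n:ℝ) ^ (-ν - 2) := by rw [hs_def]; ring_nf
  rw [en1] at hb1 hb2
  rw [en2] at hb2
  have hnn : (0:ℝ) ≤ (n:ℝ) ^ (-ν - 2) := Real.rpow_nonneg (Nat.cast_nonneg n) _
  rw [Real.norm_eq_abs, Real.norm_eq_abs, abs_of_nonneg hnn, abs_of_nonneg (by linarith)]
  linarith [mul_nonneg (by linarith : (0:ℝ) ≤ s/8) hnn]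
end
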